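/- There exists a constant c > 0 depending only on the dimension d such that for every α ∈ (0,2), every h > 0, and every ξ ∈ D_h = [−π/h, π/h]^d, one has |M_h(ξ)^{α/2} − |ξ|^α| ≤ c h² |ξ|^{α+2}. -/

import Mathlib

open MeasureTheory Real

noncomputable section

abbrev Ed (d : ℕ) := EuclideanSpace ℝ (Fin d)

/-- The Fourier symbol of the discrete Laplacian:
`M_h(ξ) = Σ_{p=1}^d (4/h²) sin²(ξ_p h/2)`. -/
def Mh {d : ℕ} (h : ℝ) (ξ : Ed d) : ℝ :=
  ∑ p : Fin d, (4 / h ^ 2) * Real.sin (ξ p * h / 2) ^ 2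

lemma sin_lb {x : ℝ} (hx : 0 ≤ x) : x - x ^ 3 / 6 ≤ Real.sin x := by
  have key : MonotoneOn (fun t : ℝ => Real.sin t - (t - t ^ 3 / 6)) (Set.Ici 0) := by
    have hder : ∀ t : ℝ, HasDerivAt (fun t : ℝ => Real.sin t - (t - t ^ 3 / 6))
        (Real.cos t - (1 - 3 * t ^ 2 / 6)) t := by
      intro t
      have h2 : HasDerivAt (fun t : ℝ => t - t ^ 3 / 6) (1 - 3 * t ^ 2 / 6) t := by
        exact ((hasDerivAt_id t).sub ((hasDerivAt_pow 3 t).div_const 6)).congr_deriv (by norm_num)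
      exact (Real.hasDerivAt_sin t).sub h2
    apply monotoneOn_of_deriv_nonneg (convex_Ici 0)
    · exact Continuous.continuousOn (by continuity)
    · intro t _
      exact (hder t).differentiableAt.differentiableWithinAt
    · intro t _
      rw [(hder t).deriv]
      have := Real.one_sub_sq_div_two_le_cos (x := t)
      nlinarith
  have h0 := key Set.self_mem_Ici (Set.mem_Ici.2 hx) hx
  simp only [Real.sin_zero] at h0
  have : (0:ℝ) - (0 - 0 ^ 3 / 6) ≤ Real.sin x - (x - x ^ 3 / 6) := by simpa using h0
  linarith [this]

lemma sin_sq_lb (t : ℝ) : t ^ 2 - t ^ 4 / 3 ≤ Real.sin t ^ 2 := by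
  have h0 : ∀ s : ℝ, 0 ≤ s → s ^ 2 - s ^ 4 / 3 ≤ Real.sin s ^ 2 := by
    intro s hs
    rcases le_or_gt (s ^ 2) 3 with h3 | h3
    · have h1 := sin_lb hs
      have h2 : 0 ≤ s - s ^ 3 / 6 := by nlinarith
      have h4 : (s - s ^ 3 / 6) ^ 2 ≤ Real.sin s ^ 2 := pow_le_pow_left₀ h2 h1 2
      nlinarith [h4, sq_nonneg (s ^ 3)]
    · nlinarith [sq_nonneg (Real.sin s)]
  rcases le_or_gt 0 t with h | h
  · exact h0 t h
  · have := h0 (-t) (by linarith)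
    rw [Real.sin_neg] at this
    nlinarith [this]

lemma sum_sq_le_sq_sum {n : ℕ} (a : Fin n → ℝ) (ha : ∀ p, 0 ≤ a p) :
    ∑ p, a p ^ 2 ≤ (∑ p, a p) ^ 2 := by
  have hS : ∀ p, a p ≤ ∑ q, a q := fun p =>
    Finset.single_le_sum (fun q _ => ha q) (Finset.mem_univ p)
  calc ∑ p, a p ^ 2 ≤ ∑ p, a p * (∑ q, a q) := by
        refine Finset.sum_le_sum fun p _ => ?_
        rw [sq]
        exact mul_le_mul_of_nonneg_left (hS p) (ha p)
    _ = (∑ p, a p) ^ 2 := by rw [← Finset.sum_mul, sq]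

lemma norm_sq_eq {d : ℕ} (ξ : Ed d) : ‖ξ‖ ^ 2 = ∑ p, ξ p ^ 2 := by
  rw [EuclideanSpace.norm_eq, Real.sq_sqrt (by positivity)]
  simp [Real.norm_eq_abs, sq_abs]

lemma Mh_nonneg {d : ℕ} (h : ℝ) (ξ : Ed d) : 0 ≤ Mh h ξ := by
  unfold Mh; positivity

lemma Mh_le {d : ℕ} {h : ℝ} (hh : 0 < h) (ξ : Ed d) : Mh h ξ ≤ ‖ξ‖ ^ 2 := by
  rw [norm_sq_eq]
  unfold Mh
  refine Finset.sum_le_sum fun p _ => ?_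
  have := Real.sin_sq_le_sq (x := ξ p * h / 2)
  have hh2 : (0:ℝ) < h ^ 2 := by positivity
  rw [div_mul_eq_mul_div, div_le_iff₀ hh2]
  nlinarith

lemma Mh_lb {d : ℕ} {h : ℝ} (hh : 0 < h) (ξ : Ed d) :
    ‖ξ‖ ^ 2 - h ^ 2 * ‖ξ‖ ^ 4 / 12 ≤ Mh h ξ := by
  have h1 : ∑ p, (ξ p ^ 2 - h ^ 2 * ξ p ^ 4 / 12) ≤ Mh h ξ := by
    unfold Mh
    refine Finset.sum_le_sum fun p _ => ?_
    have := sin_sq_lb (ξ p * h / 2)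
    have hh2 : (0:ℝ) < h ^ 2 := by positivity
    rw [div_mul_eq_mul_div, le_div_iff₀ hh2]
    nlinarith [this]
  have h2 : ∑ p, ξ p ^ 4 ≤ (‖ξ‖ ^ 2) ^ 2 := by
    rw [norm_sq_eq]
    have := sum_sq_le_sq_sum (fun p => ξ p ^ 2) (fun p => sq_nonneg _)
    calc ∑ p, ξ p ^ 4 = ∑ p, (ξ p ^ 2) ^ 2 := by
          refine Finset.sum_congr rfl fun p _ => by ring
      _ ≤ (∑ p, ξ p ^ 2) ^ 2 := this
  rw [Finset.sum_sub_distrib, ← Finset.sum_div, ← Finset.mul_sum, ← norm_sq_eq] at h1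
  nlinarith

set_option maxHeartbeats 1000000 in
/-- There is a constant `c` depending only on `d` such that
`|M_h(ξ)^{α/2} - |ξ|^α| ≤ c h² |ξ|^{α+2}` for all `α ∈ (0,2)`, `h > 0` and
`ξ ∈ D_h = [-π/h,π/h]^d`. -/
theorem stmt6 {d : ℕ} (hd : 1 ≤ d) :
    ∃ c : ℝ, 0 < c ∧
      ∀ α : ℝ, 0 < α → α < 2 → ∀ h : ℝ, 0 < h → ∀ ξ : Ed d,
        (∀ p, |ξ p| ≤ Real.pi / h) →
        |Mh h ξ ^ (α / 2) - ‖ξ‖ ^ α| ≤ c * h ^ 2 * ‖ξ‖ ^ (α + 2) := by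
  refine ⟨1, one_pos, fun α hα hα2 h hh ξ _ => ?_⟩
  rcases eq_or_lt_of_le (norm_nonneg ξ) with hN0 | hN
  · -- ξ = 0
    have hxi : ξ = 0 := by simpa using hN0.symm
    subst hxi
    have hM : Mh h (0 : Ed d) = 0 := by
      have hz : ∀ p : Fin d, (0 : Ed d) p = 0 := fun p => rfl
      unfold Mh
      simp [hz]
    rw [hM, norm_zero, Real.zero_rpow (by positivity), Real.zero_rpow (ne_of_gt hα),
      Real.zero_rpow (by positivity : α + 2 ≠ 0)]
    simp
  · set N := ‖ξ‖ with hNdef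
    have hb : (0:ℝ) < N ^ 2 := by positivity
    have hab : Mh h ξ ≤ N ^ 2 := Mh_le hh ξ
    have ha0 : 0 ≤ Mh h ξ := Mh_nonneg h ξ
    have hs0 : 0 < α / 2 := by linarith
    have hs1 : α / 2 ≤ 1 := by linarith
    -- b^s = N^α
    have hbs : (N ^ 2 : ℝ) ^ (α / 2) = N ^ α := by
      rw [← Real.rpow_natCast N 2, ← Real.rpow_mul hN.le]
      push_cast
      rw [show (2:ℝ) * (α / 2) = α by ring]
    have hle : Mh h ξ ^ (α / 2) ≤ N ^ α := by
      rw [← hbs]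
      exact Real.rpow_le_rpow ha0 hab hs0.le
    have habs : |Mh h ξ ^ (α / 2) - N ^ α| = N ^ α - Mh h ξ ^ (α / 2) := by
      rw [abs_sub_comm, abs_of_nonneg (sub_nonneg.2 hle)]
    have hsplit : N ^ (α + 2) = N ^ α * N ^ 2 := by
      rw [Real.rpow_add hN, ← Real.rpow_natCast N 2]
      norm_num
    rw [habs]
    rcases le_or_gt 6 (h ^ 2 * N ^ 2) with hbig | hsmall
    · -- trivial regime
      have h1 : N ^ α - Mh h ξ ^ (α / 2) ≤ N ^ α :=
        sub_le_self _ (Real.rpow_nonneg ha0 _)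
      have h2 : N ^ α ≤ h ^ 2 * N ^ 2 / 6 * N ^ α := by
        nlinarith [Real.rpow_pos_of_pos hN α]
      calc N ^ α - Mh h ξ ^ (α / 2) ≤ N ^ α := h1
        _ ≤ h ^ 2 * N ^ 2 / 6 * N ^ α := h2
        _ ≤ 1 * h ^ 2 * N ^ (α + 2) := by
            rw [hsplit]
            nlinarith [Real.rpow_pos_of_pos hN α, sq_nonneg h]
    · -- Taylor regime
      set a := Mh h ξ with hadef
      have hlb : N ^ 2 - h ^ 2 * N ^ 4 / 12 ≤ a := Mh_lb hh ξ
      have hgap : N ^ 2 - a ≤ h ^ 2 * (N ^ 2) ^ 2 / 12 := by nlinarith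
      have hahalf : N ^ 2 / 2 ≤ a := by nlinarith
      have hapos : 0 < a := lt_of_lt_of_le (by positivity) hahalf
      -- Bernoulli: (N^2)^s ≤ a^s + a^(s-1) * (N^2 - a)
      have hr : 0 ≤ (N ^ 2 - a) / a := div_nonneg (by linarith) hapos.le
      have hbern : (1 + (N ^ 2 - a) / a) ^ (α / 2) ≤ 1 + (N ^ 2 - a) / a := by
        calc (1 + (N ^ 2 - a) / a) ^ (α / 2) ≤ 1 + (α / 2) * ((N ^ 2 - a) / a) :=
              rpow_one_add_le_one_add_mul_self (by linarith) hs0.le hs1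
          _ ≤ 1 + (N ^ 2 - a) / a := by nlinarith
      have hbern2 : (N ^ 2 : ℝ) ^ (α / 2) ≤ a ^ (α / 2) * (1 + (N ^ 2 - a) / a) := by
        have heq : (N ^ 2 : ℝ) = a * (1 + (N ^ 2 - a) / a) := by
          field_simp
          ring
        calc (N ^ 2 : ℝ) ^ (α / 2) = a ^ (α / 2) * (1 + (N ^ 2 - a) / a) ^ (α / 2) := by
              conv_lhs => rw [heq]
              rw [Real.mul_rpow hapos.le (by linarith)]
          _ ≤ a ^ (α / 2) * (1 + (N ^ 2 - a) / a) :=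
              mul_le_mul_of_nonneg_left hbern (Real.rpow_nonneg hapos.le _)
      have hmain : N ^ α - a ^ (α / 2) ≤ a ^ (α / 2 - 1) * (N ^ 2 - a) := by
        have := hbern2
        rw [hbs] at this
        have h3 : a ^ (α / 2) * (1 + (N ^ 2 - a) / a) =
            a ^ (α / 2) + a ^ (α / 2 - 1) * (N ^ 2 - a) := by
          rw [Real.rpow_sub hapos, Real.rpow_one]
          field_simp
        linarith [this.trans_eq h3]
      -- bound a^(s-1) ≤ 2 * (N^2)^(s-1)
      have hexp : a ^ (α / 2 - 1) ≤ 2 * (N ^ 2 : ℝ) ^ (α / 2 - 1) := by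
        have h4 : a ^ (α / 2 - 1) ≤ (N ^ 2 / 2 : ℝ) ^ (α / 2 - 1) :=
          Real.rpow_le_rpow_of_nonpos (by positivity) hahalf (by linarith)
        have h5 : (2:ℝ)⁻¹ ≤ (2:ℝ) ^ (α / 2 - 1) := by
          have := Real.rpow_le_rpow_of_exponent_le (x := 2) (by norm_num)
            (show (-1:ℝ) ≤ α / 2 - 1 by linarith)
          rwa [Real.rpow_neg_one] at this
        have h6 : (N ^ 2 / 2 : ℝ) ^ (α / 2 - 1) =
            (N ^ 2 : ℝ) ^ (α / 2 - 1) / (2:ℝ) ^ (α / 2 - 1) :=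
          Real.div_rpow hb.le (by norm_num) _
        have hP : (0:ℝ) < (N ^ 2 : ℝ) ^ (α / 2 - 1) := Real.rpow_pos_of_pos hb _
        have hT : (0:ℝ) < (2:ℝ) ^ (α / 2 - 1) := Real.rpow_pos_of_pos (by norm_num) _
        calc a ^ (α / 2 - 1) ≤ (N ^ 2 / 2 : ℝ) ^ (α / 2 - 1) := h4
          _ = (N ^ 2 : ℝ) ^ (α / 2 - 1) / (2:ℝ) ^ (α / 2 - 1) := h6
          _ ≤ 2 * (N ^ 2 : ℝ) ^ (α / 2 - 1) := by
              rw [div_le_iff₀ hT]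
              calc (N ^ 2 : ℝ) ^ (α / 2 - 1)
                  = 2 * (N ^ 2 : ℝ) ^ (α / 2 - 1) * 2⁻¹ := by ring
                _ ≤ 2 * (N ^ 2 : ℝ) ^ (α / 2 - 1) * (2:ℝ) ^ (α / 2 - 1) :=
                    mul_le_mul_of_nonneg_left h5 (by positivity)
      have hfin : a ^ (α / 2 - 1) * (N ^ 2 - a) ≤
          2 * (N ^ 2 : ℝ) ^ (α / 2 - 1) * (h ^ 2 * (N ^ 2) ^ 2 / 12) := by
        have hpos := Real.rpow_pos_of_pos hb (α / 2 - 1)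
        have hgap0 : 0 ≤ N ^ 2 - a := by linarith
        have hae : 0 ≤ a ^ (α / 2 - 1) := Real.rpow_nonneg hapos.le _
        calc a ^ (α / 2 - 1) * (N ^ 2 - a)
            ≤ 2 * (N ^ 2 : ℝ) ^ (α / 2 - 1) * (N ^ 2 - a) :=
              mul_le_mul_of_nonneg_right hexp hgap0
          _ ≤ 2 * (N ^ 2 : ℝ) ^ (α / 2 - 1) * (h ^ 2 * (N ^ 2) ^ 2 / 12) :=
              mul_le_mul_of_nonneg_left hgap (by positivity)
      have hcollapse : 2 * (N ^ 2 : ℝ) ^ (α / 2 - 1) * (h ^ 2 * (N ^ 2) ^ 2 / 12) =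
          h ^ 2 / 6 * N ^ (α + 2) := by
        have : ((N ^ 2 : ℝ)) ^ (α / 2 - 1) * (N ^ 2) ^ 2 = N ^ (α + 2) := by
          rw [← Real.rpow_natCast ((N:ℝ) ^ 2) 2, ← Real.rpow_add hb,
            ← Real.rpow_natCast N 2, ← Real.rpow_mul hN.le]
          congr 1
          push_cast
          ring
        rw [← this]; ring
      have hNalpha : 0 < N ^ (α + 2) := Real.rpow_pos_of_pos hN _
      calc N ^ α - a ^ (α / 2) ≤ a ^ (α / 2 - 1) * (N ^ 2 - a) := hmain
        _ ≤ 2 * (N ^ 2 : ℝ) ^ (α / 2 - 1) * (h ^ 2 * (N ^ 2) ^ 2 / 12) := hfin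
        _ = h ^ 2 / 6 * N ^ (α + 2) := hcollapse
        _ ≤ 1 * h ^ 2 * N ^ (α + 2) := by nlinarith [sq_nonneg h]
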